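/- (Characterization of depth ≥ 2) Let a₁, …, aₙ generate an E-regular ideal 𝔞 of a commutative ring A, where E is an A-module. Then the following are equivalent: (1) 𝔞 remains E[X₁,…,Xₙ]/fE[X₁,…,Xₙ]-regular where f = Σᵢ aᵢXᵢ; (2) for every sequence (v₁,…,vₙ) in E with aᵢvⱼ = aⱼvᵢ for all i,j, there exists v ∈ E with vᵢ = aᵢv for all i; moreover such v is then unique. -/

import Mathlib

open TensorProduct MvPolynomial

namespace Stmt10Aux

variable {A : Type*} [CommRing A] {E : Type*} [AddCommGroup E] [Module A E] {n : ℕ}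

/-- The shift-and-scale operator corresponding to multiplication by `f = ∑ aᵢ Xᵢ`
on the coefficient model `(Fin n →₀ ℕ) →₀ E` of `E[X₁,…,Xₙ]`. -/
noncomputable def shiftS (a : Fin n → A) :
    ((Fin n →₀ ℕ) →₀ E) →ₗ[A] ((Fin n →₀ ℕ) →₀ E) :=
  ∑ i, a i • Finsupp.lmapDomain E A (· + Finsupp.single i 1)

variable (a : Fin n → A)

lemma shiftS_apply (h : (Fin n →₀ ℕ) →₀ E) (m : Fin n →₀ ℕ) :
    shiftS a h m = ∑ i, a i • (Finsupp.mapDomain (· + Finsupp.single i 1) h) m := by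
  simp [shiftS, Finsupp.finset_sum_apply, Finsupp.lmapDomain]

lemma mapDomain_add_apply_of_le {d m : Fin n →₀ ℕ} (h : (Fin n →₀ ℕ) →₀ E)
    (hd : d ≤ m) : Finsupp.mapDomain (· + d) h m = h (m - d) := by
  have : m = (m - d) + d := (tsub_add_cancel_of_le hd).symm
  rw [this, Finsupp.mapDomain_apply (add_left_injective d)]
  simp

lemma mapDomain_add_apply_of_not_le {d m : Fin n →₀ ℕ} (h : (Fin n →₀ ℕ) →₀ E)
    (hd : ¬ d ≤ m) : Finsupp.mapDomain (· + d) h m = 0 := by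
  apply Finsupp.mapDomain_notin_range
  rintro ⟨c, rfl⟩
  exact hd le_add_self

lemma shiftS_apply_single_one (h : (Fin n →₀ ℕ) →₀ E) (i : Fin n) :
    shiftS a h (Finsupp.single i 1) = a i • h 0 := by
  rw [shiftS_apply]
  rw [Finset.sum_eq_single i]
  · rw [mapDomain_add_apply_of_le h le_rfl]
    simp
  · intro j _ hj
    rw [mapDomain_add_apply_of_not_le h, smul_zero]
    intro hle
    have := Finsupp.le_def.mp hle j
    simp [Finsupp.single_apply, hj.symm] at this
  · simp

/-- encoding of monomials, strictly monotone for the relevant lex comparisons -/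
def code (μ : Fin n →₀ ℕ) : ℕ := ∑ i, μ i * 2 ^ (n - 1 - (i : ℕ))

lemma code_add (x y : Fin n →₀ ℕ) : code (x + y) = code x + code y := by
  simp [code, add_mul, Finset.sum_add_distrib]

lemma code_single (l : Fin n) : code (Finsupp.single l (1:ℕ)) = 2 ^ (n - 1 - (l:ℕ)) := by
  simp [code, Finsupp.single_apply]

variable (hreg : ∀ x : E, (∀ i, a i • x = 0) → x = 0)

-- McCoy-type key lemma: multiplication by the generic linear form is injective.
include hreg in
lemma shiftS_ker_aux : ∀ (k : ℕ) (h : (Fin n →₀ ℕ) →₀ E),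
    h.support.card ≤ k → shiftS a h = 0 → h = 0 := by
  intro k
  induction k with
  | zero =>
    intro h hcard _
    rw [Nat.le_zero, Finset.card_eq_zero, Finsupp.support_eq_empty] at hcard
    exact hcard
  | succ k IH =>
    intro h hcard hS
    rcases eq_or_ne h 0 with rfl | hne
    · rfl
    have hsupp : h.support.Nonempty := Finsupp.support_nonempty_iff.mpr hne
    obtain ⟨μ, hμmem, hμmax⟩ := Finset.exists_max_image h.support code hsupp
    have key : ∀ (jv : ℕ) (j : Fin n), (j : ℕ) = jv → a j • h = 0 := by
      intro jv
      induction jv using Nat.strong_induction_on with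
      | _ jv IHj =>
        intro j hj
        -- coefficient of `shiftS a h` at `μ + single j 1` gives `a j • h μ = 0`
        have hcoef : (0:E) = a j • h μ := by
          have h0 : shiftS a h (μ + Finsupp.single j 1) = 0 := by rw [hS]; rfl
          rw [shiftS_apply] at h0
          rw [← h0, Finset.sum_eq_single j]
          · rw [mapDomain_add_apply_of_le h le_add_self, add_tsub_cancel_right]
          · intro l _ hl
            by_cases hle : Finsupp.single l 1 ≤ μ + Finsupp.single j 1
            · rw [mapDomain_add_apply_of_le h hle]
              set ν := μ + Finsupp.single j 1 - Finsupp.single l 1 with hν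
              have hνe : ν + Finsupp.single l 1 = μ + Finsupp.single j 1 :=
                tsub_add_cancel_of_le hle
              rcases lt_or_gt_of_ne hl with hlt | hgt
              · -- l < j : use inner induction hypothesis
                have hz : a l • h = 0 := IHj (l : ℕ) (by rw [← hj]; exact hlt) l rfl
                have : a l • h ν = (a l • h) ν := rfl
                rw [this, hz]; rfl
              · -- j < l : h ν = 0 since code ν > code μ
                have hν0 : h ν = 0 := by
                  by_contra hν0
                  have hmem : ν ∈ h.support := Finsupp.mem_support_iff.mpr hν0
                  have hle' := hμmax ν hmem
                  have hcode : code ν + 2 ^ (n - 1 - (l:ℕ)) =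
                      code μ + 2 ^ (n - 1 - (j:ℕ)) := by
                    have := congrArg code hνe
                    rwa [code_add, code_add, code_single, code_single] at this
                  have h2 : 2 ^ (n - 1 - (l:ℕ)) < 2 ^ (n - 1 - (j:ℕ)) := by
                    apply Nat.pow_lt_pow_right one_lt_two
                    have := l.isLt
                    have hgt' : (j:ℕ) < (l:ℕ) := hgt
                    omega
                  omega
                rw [hν0, smul_zero]
            · rw [mapDomain_add_apply_of_not_le h hle, smul_zero]
          · intro hj'; exact absurd (Finset.mem_univ j) hj'
        -- now `a j • h` has strictly smaller support
        have hsub : (a j • h).support ⊆ h.support.erase μ := by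
          intro m hm
          rw [Finset.mem_erase]
          refine ⟨?_, Finsupp.support_smul hm⟩
          rintro rfl
          rw [Finsupp.mem_support_iff] at hm
          exact hm (by rw [Finsupp.smul_apply, ← hcoef])
        apply IH
        · calc (a j • h).support.card ≤ (h.support.erase μ).card := Finset.card_le_card hsub
            _ = h.support.card - 1 := Finset.card_erase_of_mem hμmem
            _ ≤ k := by omega
        · rw [map_smul, hS, smul_zero]
    ext m
    refine hreg (h m) fun i => ?_
    have := key (i : ℕ) i rfl
    calc a i • h m = (a i • h) m := rfl
      _ = 0 := by rw [this]; rfl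

include hreg in
lemma shiftS_injective : Function.Injective (shiftS a : ((Fin n →₀ ℕ) →₀ E) →ₗ[A] _) := by
  intro x y hxy
  have : shiftS a (x - y) = 0 := by rw [map_sub, hxy, sub_self]
  have hz := shiftS_ker_aux a hreg (x - y).support.card (x - y) le_rfl this
  exact sub_eq_zero.mp hz

lemma shiftS_single_zero (x : E) :
    shiftS a (Finsupp.single 0 x) = ∑ j, Finsupp.single (Finsupp.single j 1) (a j • x) := by
  unfold shiftS
  rw [LinearMap.sum_apply]
  refine Finset.sum_congr rfl fun j _ => ?_
  rw [LinearMap.smul_apply, Finsupp.lmapDomain_apply, Finsupp.mapDomain_single,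
    Finsupp.smul_single, zero_add]

omit hreg in
lemma core_forward
    (H : ∀ g : (Fin n →₀ ℕ) →₀ E,
      (∀ i, ∃ h, a i • g = shiftS a h) → ∃ h, g = shiftS a h)
    (v : Fin n → E) (hv : ∀ i j, a i • v j = a j • v i) :
    ∃ w : E, ∀ i, v i = a i • w := by
  set g : (Fin n →₀ ℕ) →₀ E := ∑ j, Finsupp.single (Finsupp.single j 1) (v j) with hgdef
  have hg : ∀ i, a i • g = shiftS a (Finsupp.single 0 (v i)) := by
    intro i
    rw [shiftS_single_zero, hgdef, Finset.smul_sum]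
    refine Finset.sum_congr rfl fun j _ => ?_
    rw [Finsupp.smul_single, hv i j]
  obtain ⟨h, hh⟩ := H g fun i => ⟨_, hg i⟩
  refine ⟨h 0, fun i => ?_⟩
  have h1 : g (Finsupp.single i 1) = v i := by
    rw [hgdef, Finsupp.finset_sum_apply, Finset.sum_eq_single i]
    · rw [Finsupp.single_eq_same]
    · intro j _ hj
      rw [Finsupp.single_eq_of_ne']
      exact fun hc => hj (Finsupp.single_left_injective one_ne_zero hc)
    · simp
  rw [← h1, hh, shiftS_apply_single_one]

include hreg in
lemma core_backward
    (H : ∀ v : Fin n → E, (∀ i j, a i • v j = a j • v i) → ∃ w : E, ∀ i, v i = a i • w)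
    (g : (Fin n →₀ ℕ) →₀ E) (hg : ∀ i, ∃ h, a i • g = shiftS a h) :
    ∃ h, g = shiftS a h := by
  choose h hh using hg
  have hprop : ∀ i j, a i • h j = a j • h i := by
    intro i j
    apply shiftS_injective a hreg
    rw [map_smul, map_smul, ← hh j, ← hh i, smul_smul, smul_smul, mul_comm]
  have hm : ∀ m, ∃ w : E, ∀ i, h i m = a i • w := by
    intro m
    refine H (fun i => h i m) fun i j => ?_
    have := DFunLike.congr_fun (hprop i j) m
    rwa [Finsupp.smul_apply, Finsupp.smul_apply] at this
  choose w hw using hm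
  have hwsupp : ∀ m, w m ≠ 0 → m ∈ Finset.univ.biUnion fun i => (h i).support := by
    intro m hm0
    by_contra hmem
    refine hm0 (hreg (w m) fun i => ?_)
    rw [← hw m i]
    have : m ∉ (h i).support := fun hc =>
      hmem (Finset.mem_biUnion.mpr ⟨i, Finset.mem_univ i, hc⟩)
    exact Finsupp.notMem_support_iff.mp this
  set H0 : (Fin n →₀ ℕ) →₀ E :=
    Finsupp.onFinset (Finset.univ.biUnion fun i => (h i).support) w hwsupp with hH0
  have hhi : ∀ i, h i = a i • H0 := by
    intro i
    ext m
    rw [Finsupp.smul_apply, hH0, Finsupp.onFinset_apply, hw m i]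
  have hzero : ∀ i, a i • (g - shiftS a H0) = 0 := by
    intro i
    rw [smul_sub, hh i, hhi i, map_smul, sub_self]
  refine ⟨H0, ?_⟩
  rw [← sub_eq_zero]
  ext m
  refine hreg _ fun i => ?_
  rw [← Finsupp.smul_apply, hzero i, Finsupp.coe_zero, Pi.zero_apply]

/-- transfer map from the coefficient model to the tensor model -/
noncomputable def phi :
    ((Fin n →₀ ℕ) →₀ E) →ₗ[A] MvPolynomial (Fin n) A ⊗[A] E :=
  Finsupp.lsum ℕ fun m => TensorProduct.mk A (MvPolynomial (Fin n) A) E (monomial m 1)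

lemma phi_single (m : Fin n →₀ ℕ) (e : E) :
    phi (Finsupp.single m e) = (monomial m (1:A)) ⊗ₜ[A] e := by
  simp [phi]

/-- coefficient extraction -/
noncomputable def psi (m : Fin n →₀ ℕ) :
    MvPolynomial (Fin n) A ⊗[A] E →ₗ[A] E :=
  TensorProduct.lift ((LinearMap.lsmul A E).comp (lcoeff A m))

lemma psi_phi (h : (Fin n →₀ ℕ) →₀ E) (m : Fin n →₀ ℕ) :
    psi (A := A) m (phi (A := A) h) = h m := by
  have : (psi (A := A) (E := E) m).comp (phi (A := A)) =
      (Finsupp.lapply m : ((Fin n →₀ ℕ) →₀ E) →ₗ[A] E) := by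
    apply Finsupp.lhom_ext
    intro m' e
    rw [LinearMap.comp_apply, phi_single]
    simp only [psi, TensorProduct.lift.tmul, LinearMap.comp_apply, lcoeff_apply,
      LinearMap.lsmul_apply, Finsupp.lapply_apply, coeff_monomial, Finsupp.single_apply]
    split
    · rw [one_smul]
    · rw [zero_smul]
  exact DFunLike.congr_fun this h

lemma phi_injective : Function.Injective (phi : ((Fin n →₀ ℕ) →₀ E) →ₗ[A] _) := by
  intro x y hxy
  ext m
  rw [← psi_phi (A := A) x m, ← psi_phi (A := A) y m, hxy]

lemma phi_surjective : Function.Surjective (phi : ((Fin n →₀ ℕ) →₀ E) →ₗ[A] _) := by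
  intro z
  induction z with
  | zero => exact ⟨0, map_zero _⟩
  | tmul p e =>
    induction p using MvPolynomial.induction_on' with
    | monomial u c =>
      refine ⟨Finsupp.single u (c • e), ?_⟩
      rw [phi_single, TensorProduct.tmul_smul, TensorProduct.smul_tmul']
      congr 1
      rw [smul_monomial, smul_eq_mul, mul_one]
    | add p q hp hq =>
      obtain ⟨hp', hhp⟩ := hp
      obtain ⟨hq', hhq⟩ := hq
      exact ⟨hp' + hq', by rw [map_add, hhp, hhq, TensorProduct.add_tmul]⟩
  | add x y hx hy =>
    obtain ⟨hx', hhx⟩ := hx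
    obtain ⟨hy', hhy⟩ := hy
    exact ⟨hx' + hy', by rw [map_add, hhx, hhy]⟩

lemma C_smul (c : A) (z : MvPolynomial (Fin n) A ⊗[A] E) :
    (C c : MvPolynomial (Fin n) A) • z = c • z := by
  rw [← MvPolynomial.algebraMap_eq, algebraMap_smul]

lemma phi_shiftS (h : (Fin n →₀ ℕ) →₀ E) :
    phi (A := A) (shiftS a h)
      = (∑ i, C (a i) * (X i : MvPolynomial (Fin n) A)) • phi (A := A) h := by
  have : (phi (E := E)).comp (shiftS a) =
      ((LinearMap.lsmul (MvPolynomial (Fin n) A) (MvPolynomial (Fin n) A ⊗[A] E)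
          (∑ i, C (a i) * (X i : MvPolynomial (Fin n) A))).restrictScalars A).comp
        (phi (E := E)) := by
    apply Finsupp.lhom_ext
    intro m e
    simp only [LinearMap.comp_apply, LinearMap.restrictScalars_apply,
      LinearMap.lsmul_apply, phi_single]
    rw [shiftS, LinearMap.sum_apply, map_sum, TensorProduct.smul_tmul', smul_eq_mul,
      Finset.sum_mul, TensorProduct.sum_tmul]
    refine Finset.sum_congr rfl fun i _ => ?_
    rw [LinearMap.smul_apply, Finsupp.lmapDomain_apply, Finsupp.mapDomain_single,
      Finsupp.smul_single, phi_single]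
    have h1 : (C (a i) * (X i : MvPolynomial (Fin n) A)) * (monomial m (1:A)) =
        monomial (m + Finsupp.single i 1) (a i) := by
      rw [X, C_apply, monomial_mul, monomial_mul]
      rw [mul_one, mul_one, zero_add, add_comm]
    rw [h1, show (monomial (m + Finsupp.single i 1)) (a i) =
        a i • monomial (m + Finsupp.single i 1) (1:A) by
          rw [smul_monomial, smul_eq_mul, mul_one],
      TensorProduct.smul_tmul]
  exact DFunLike.congr_fun this h

lemma mem_span_f_smul_top_iff (f : MvPolynomial (Fin n) A)
    (z : MvPolynomial (Fin n) A ⊗[A] E) :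
    z ∈ Ideal.span {f} •
        (⊤ : Submodule (MvPolynomial (Fin n) A) (MvPolynomial (Fin n) A ⊗[A] E)) ↔
      ∃ h, z = f • h := by
  constructor
  · intro hz
    refine Submodule.smul_induction_on hz ?_ ?_
    · intro r hr x _
      obtain ⟨c, rfl⟩ := Ideal.mem_span_singleton.mp hr
      exact ⟨c • x, by rw [mul_smul]⟩
    · rintro x y ⟨hx, rfl⟩ ⟨hy, rfl⟩
      exact ⟨hx + hy, (smul_add f hx hy).symm⟩
  · rintro ⟨h, rfl⟩
    exact Submodule.smul_mem_smul (Ideal.mem_span_singleton_self f) Submodule.mem_top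

include hreg in
/-- the bridge between the tensor model statement and the coefficient model statement -/
lemma bridge :
    (∀ g : MvPolynomial (Fin n) A ⊗[A] E,
        (∀ i, (C (a i) : MvPolynomial (Fin n) A) • g ∈
          Ideal.span {∑ i, C (a i) * (X i : MvPolynomial (Fin n) A)} •
            (⊤ : Submodule (MvPolynomial (Fin n) A) (MvPolynomial (Fin n) A ⊗[A] E))) →
        g ∈ Ideal.span {∑ i, C (a i) * (X i : MvPolynomial (Fin n) A)} •
            (⊤ : Submodule (MvPolynomial (Fin n) A) (MvPolynomial (Fin n) A ⊗[A] E))) ↔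
      (∀ v : Fin n → E, (∀ i j, a i • v j = a j • v i) → ∃ w : E, ∀ i, v i = a i • w) := by
  set f : MvPolynomial (Fin n) A := ∑ i, C (a i) * X i with hf
  have hNiff : (∀ g : MvPolynomial (Fin n) A ⊗[A] E,
      (∀ i, (C (a i) : MvPolynomial (Fin n) A) • g ∈ Ideal.span {f} •
        (⊤ : Submodule (MvPolynomial (Fin n) A) (MvPolynomial (Fin n) A ⊗[A] E))) →
        g ∈ Ideal.span {f} •
        (⊤ : Submodule (MvPolynomial (Fin n) A) (MvPolynomial (Fin n) A ⊗[A] E))) ↔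
      (∀ g' : (Fin n →₀ ℕ) →₀ E,
        (∀ i, ∃ h, a i • g' = shiftS a h) → ∃ h, g' = shiftS a h) := by
    constructor
    · intro HL g' hg'
      have hmem : ∀ i, (C (a i) : MvPolynomial (Fin n) A) • phi (A := A) g' ∈
          Ideal.span {f} •
            (⊤ : Submodule (MvPolynomial (Fin n) A) (MvPolynomial (Fin n) A ⊗[A] E)) := by
        intro i
        obtain ⟨h, hh⟩ := hg' i
        rw [C_smul, ← map_smul, hh, phi_shiftS]
        exact (mem_span_f_smul_top_iff f _).mpr ⟨phi (A := A) h, rfl⟩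
      obtain ⟨h, hh⟩ := (mem_span_f_smul_top_iff f _).mp (HL (phi (A := A) g') hmem)
      obtain ⟨h', rfl⟩ := phi_surjective h
      rw [← phi_shiftS] at hh
      exact ⟨h', phi_injective hh⟩
    · intro HN g hg
      obtain ⟨g', rfl⟩ := phi_surjective g
      have hg' : ∀ i, ∃ h, a i • g' = shiftS a h := by
        intro i
        obtain ⟨h, hh⟩ := (mem_span_f_smul_top_iff f _).mp (hg i)
        rw [C_smul, ← map_smul] at hh
        obtain ⟨h', rfl⟩ := phi_surjective h
        rw [← phi_shiftS] at hh
        exact ⟨h', phi_injective hh⟩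
      obtain ⟨h, hh⟩ := HN g' hg'
      rw [hh, phi_shiftS]
      exact (mem_span_f_smul_top_iff f _).mpr ⟨phi (A := A) h, rfl⟩
  rw [hNiff]
  exact ⟨fun H => core_forward a H, fun H => core_backward a hreg H⟩

end Stmt10Aux

open TensorProduct MvPolynomial in
/-- Characterization of depth ≥ 2: for `𝔞 = ⟨a₁,…,aₙ⟩` an `E`-regular ideal,
`𝔞` is regular on `E[X₁,…,Xₙ]/f·E[X₁,…,Xₙ]` (with `f = ∑ aᵢXᵢ`, the polynomial module
realized as `A[X] ⊗[A] E`) iff every family proportional to `(a₁,…,aₙ)` is a multiple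
of it; moreover the multiplier is then unique. -/
theorem stmt10 {A : Type*} [CommRing A] {E : Type*} [AddCommGroup E] [Module A E]
    {n : ℕ} (a : Fin n → A)
    (hreg : ∀ x : E, (∀ i, a i • x = 0) → x = 0) :
    ((∀ g : MvPolynomial (Fin n) A ⊗[A] E,
        (∀ i, (C (a i) : MvPolynomial (Fin n) A) • g ∈
          Ideal.span {∑ i, C (a i) * (X i : MvPolynomial (Fin n) A)} •
            (⊤ : Submodule (MvPolynomial (Fin n) A) (MvPolynomial (Fin n) A ⊗[A] E))) →
        g ∈ Ideal.span {∑ i, C (a i) * (X i : MvPolynomial (Fin n) A)} •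
            (⊤ : Submodule (MvPolynomial (Fin n) A) (MvPolynomial (Fin n) A ⊗[A] E))) ↔
      (∀ v : Fin n → E, (∀ i j, a i • v j = a j • v i) → ∃ w : E, ∀ i, v i = a i • w))
    ∧
    ((∀ g : MvPolynomial (Fin n) A ⊗[A] E,
        (∀ i, (C (a i) : MvPolynomial (Fin n) A) • g ∈
          Ideal.span {∑ i, C (a i) * (X i : MvPolynomial (Fin n) A)} •
            (⊤ : Submodule (MvPolynomial (Fin n) A) (MvPolynomial (Fin n) A ⊗[A] E))) →
        g ∈ Ideal.span {∑ i, C (a i) * (X i : MvPolynomial (Fin n) A)} •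
            (⊤ : Submodule (MvPolynomial (Fin n) A) (MvPolynomial (Fin n) A ⊗[A] E))) ↔
      (∀ v : Fin n → E, (∀ i j, a i • v j = a j • v i) → ∃! w : E, ∀ i, v i = a i • w)) := by
  have h1 := Stmt10Aux.bridge a hreg
  have uniq : ∀ (v : Fin n → E) (w w' : E), (∀ i, v i = a i • w) → (∀ i, v i = a i • w') →
      w = w' := by
    intro v w w' hw hw'
    have : ∀ i, a i • (w - w') = 0 := fun i => by rw [smul_sub, ← hw i, ← hw' i, sub_self]
    exact sub_eq_zero.mp (hreg _ this)
  refine ⟨h1, h1.trans ⟨fun H v hv => ?_, fun H v hv => (H v hv).exists⟩⟩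
  obtain ⟨w, hw⟩ := H v hv
  exact ⟨w, hw, fun y hy => uniq v y w hy hw⟩
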